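/- Let t ≥ 1 be an integer and let G be a connected regular finite simple graph on n vertices with adjacency matrix A and adjacency eigenvalues λ_1 ≥ λ_2 ≥ ... ≥ λ_n. Let p be a real polynomial of degree at most t, with W(p) = max_{u ∈ V(G)} (p(A))_{uu} and λ(p) = min_{2 ≤ i ≤ n} p(λ_i), and assume p(λ_1) > λ(p). Then eq_{t+1}(G) ≤ n · (W(p) − λ(p)) / (p(λ_1) − λ(p)). -/

import Mathlib

open SimpleGraph

/-- `S` is a `t`-equidistant set of `G`: all distinct vertices of `S` are at distance
exactly `t` in `G`. -/
def IsEquidistantSet {V : Type*} (G : SimpleGraph V) (t : ℕ) (S : Finset V) : Prop :=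
  (S : Set V).Pairwise fun u v => G.dist u v = t

/-- The `t`-equidistant number of `G`: the maximum size of a `t`-equidistant set. -/
noncomputable def eqNum {V : Type*} [Fintype V] (G : SimpleGraph V) (t : ℕ) : ℕ :=
  sSup {n : ℕ | ∃ S : Finset V, IsEquidistantSet G t S ∧ S.card = n}

/-- `S` is a `t`-independent set of `G`: all distinct vertices of `S` are at pairwise
distance greater than `t` in `G`. -/
def IsTIndepSet {V : Type*} (G : SimpleGraph V) (t : ℕ) (S : Finset V) : Prop :=
  (S : Set V).Pairwise fun u v => t < G.dist u v

/-- The `t`-independence number of `G`. -/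
noncomputable def indepNumT {V : Type*} [Fintype V] (G : SimpleGraph V) (t : ℕ) : ℕ :=
  sSup {n : ℕ | ∃ S : Finset V, IsTIndepSet G t S ∧ S.card = n}

/-- The equidistant number of `G`: `max {eq_t(G) : 1 ≤ t ≤ diam G}`. -/
noncomputable def eqTotalNum {V : Type*} [Fintype V] (G : SimpleGraph V) : ℕ :=
  (Finset.Icc 1 G.diam).sup (eqNum G)

section AuxLemmas

open Polynomial Matrix Finset

variable {V : Type*} [Fintype V] [DecidableEq V]

lemma aux_pow_mulVec (A : Matrix V V ℝ) (v : V → ℝ) (μ : ℝ) (h : A *ᵥ v = μ • v) (m : ℕ) :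
    A ^ m *ᵥ v = μ ^ m • v := by
  induction m with
  | zero => simp
  | succ m ih =>
    rw [pow_succ', ← Matrix.mulVec_mulVec, ih, Matrix.mulVec_smul, h, smul_smul, ← pow_succ]

lemma aux_aeval_mulVec (A : Matrix V V ℝ) (p : Polynomial ℝ) (v : V → ℝ) (μ : ℝ)
    (h : A *ᵥ v = μ • v) : (aeval A p) *ᵥ v = p.eval μ • v := by
  induction p using Polynomial.induction_on' with
  | add q r hq hr => rw [map_add, Matrix.add_mulVec, hq, hr, eval_add, add_smul]
  | monomial m c =>
    rw [aeval_monomial, eval_monomial, Algebra.algebraMap_eq_smul_one, smul_mul_assoc, one_mul,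
      Matrix.smul_mulVec, aux_pow_mulVec A v μ h m, smul_smul]

lemma aux_aeval_entry_zero (G : SimpleGraph V) [DecidableRel G.Adj] (p : Polynomial ℝ)
    (t : ℕ) (hp : p.natDegree ≤ t) {u v : V} (hd : t < G.dist u v) :
    (aeval (G.adjMatrix ℝ) p) u v = 0 := by
  rw [Polynomial.aeval_eq_sum_range]
  rw [Matrix.sum_apply]
  refine Finset.sum_eq_zero fun m hm => ?_
  rw [Finset.mem_range] at hm
  have hmt : m < G.dist u v := by omega
  have : IsEmpty {q : G.Walk u v | q.length = m} := by
    constructor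
    rintro ⟨q, hq⟩
    simp only [Set.mem_setOf_eq] at hq
    have := SimpleGraph.dist_le q
    omega
  rw [Matrix.smul_apply, adjMatrix_pow_apply_eq_card_walk, Fintype.card_eq_zero]
  simp

omit [DecidableEq V] in
lemma aux_abs_eigen_le (G : SimpleGraph V) [DecidableRel G.Adj] {k : ℕ}
    (hreg : G.IsRegularOfDegree k) {v : V → ℝ} (hv : v ≠ 0) {μ : ℝ}
    (h : G.adjMatrix ℝ *ᵥ v = μ • v) : |μ| ≤ k := by
  obtain ⟨w0, hw0⟩ := Function.ne_iff.mp hv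
  have : Nonempty V := ⟨w0⟩
  obtain ⟨u, -, hu⟩ := Finset.exists_max_image Finset.univ (fun w => |v w|) ⟨w0, Finset.mem_univ w0⟩
  have hupos : 0 < |v u| := lt_of_lt_of_le (abs_pos.mpr hw0) (hu w0 (Finset.mem_univ w0))
  have key : |μ| * |v u| ≤ (k : ℝ) * |v u| := by
    have h1 : (G.adjMatrix ℝ *ᵥ v) u = μ * v u := by rw [h]; simp
    calc |μ| * |v u| = |μ * v u| := (abs_mul μ (v u)).symm
      _ = |∑ w ∈ G.neighborFinset u, v w| := by rw [← h1, adjMatrix_mulVec_apply]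
      _ ≤ ∑ w ∈ G.neighborFinset u, |v w| := Finset.abs_sum_le_sum_abs _ _
      _ ≤ ∑ w ∈ G.neighborFinset u, |v u| := Finset.sum_le_sum fun w _ => hu w (Finset.mem_univ w)
      _ = (k : ℝ) * |v u| := by
          rw [Finset.sum_const, nsmul_eq_mul, card_neighborFinset_eq_degree, hreg u]
  exact le_of_mul_le_mul_right key hupos

lemma aux_eigen_const (G : SimpleGraph V) [DecidableRel G.Adj] (hG : G.Connected) {k : ℕ}
    (hreg : G.IsRegularOfDegree k) {v : V → ℝ}
    (h : G.adjMatrix ℝ *ᵥ v = (k : ℝ) • v) (u w : V) : v u = v w := by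
  have h0 : Matrix.toLin' (G.lapMatrix ℝ) v = 0 := by
    rw [Matrix.toLin'_apply]
    funext a
    have := congrFun h a
    rw [adjMatrix_mulVec_apply] at this
    simp only [Pi.smul_apply, smul_eq_mul] at this
    rw [lapMatrix_mulVec_apply, this, hreg a]
    simp
  exact (G.lapMatrix_mulVec_eq_zero_iff_forall_reachable (x := v)).mp (by rwa [Matrix.toLin'_apply] at h0) u w (hG.preconnected u w)

end AuxLemmas

set_option maxHeartbeats 1000000 in
open Polynomial Matrix Finset in
/-- Ratio-type bound. Let `G` be a connected regular graph on `n` vertices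
with adjacency eigenvalues `λ_1 ≥ ⋯ ≥ λ_n`. For a real polynomial `p` of degree at most `t`,
with `W(p)` the largest diagonal entry of `p(A)` and `λ(p) = min_{2 ≤ i ≤ n} p(λ_i)`, if
`p(λ_1) > λ(p)` then `eq_{t+1}(G) ≤ n (W(p) - λ(p)) / (p(λ_1) - λ(p))`. -/
theorem eqNum_succ_le_ratio_bound {V : Type*} [Fintype V] [DecidableEq V]
    (G : SimpleGraph V) [DecidableRel G.Adj] (hG : G.Connected)
    (k : ℕ) (hreg : G.IsRegularOfDegree k)
    (n : ℕ) (hn : Fintype.card V = n) (hn1 : 0 < n)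
    (hA : (G.adjMatrix ℝ).IsHermitian)
    (lam : Fin n → ℝ) (hanti : Antitone lam)
    (hlist : ∃ e : Fin n ≃ V, ∀ i, lam i = hA.eigenvalues (e i))
    (t : ℕ) (ht : 1 ≤ t) (p : Polynomial ℝ) (hp : p.natDegree ≤ t)
    (W lp : ℝ)
    (hW : IsGreatest (Set.range fun u : V => (Polynomial.aeval (G.adjMatrix ℝ) p) u u) W)
    (hlp : IsLeast {x : ℝ | ∃ i : Fin n, i ≠ ⟨0, hn1⟩ ∧ x = p.eval (lam i)} lp)
    (hgt : lp < p.eval (lam ⟨0, hn1⟩)) :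
    (eqNum G (t + 1) : ℝ) ≤ n * (W - lp) / (p.eval (lam ⟨0, hn1⟩) - lp) := by
  classical
  obtain ⟨e, he⟩ := hlist
  haveI hVne : Nonempty V := Fintype.card_pos_iff.mp (by omega)
  obtain ⟨u0⟩ := id hVne
  -- a maximum equidistant set S
  have hbdd : BddAbove {m : ℕ | ∃ S : Finset V, IsEquidistantSet G (t+1) S ∧ S.card = m} :=
    ⟨Fintype.card V, by rintro m ⟨S, -, rfl⟩; exact S.card_le_univ⟩
  have hmem : eqNum G (t+1) ∈ {m : ℕ | ∃ S : Finset V, IsEquidistantSet G (t+1) S ∧ S.card = m} :=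
    Nat.sSup_mem ⟨0, ∅, by simp [IsEquidistantSet], by simp⟩ hbdd
  obtain ⟨S, hS, hScard⟩ := hmem
  have hs1n : 1 ≤ eqNum G (t+1) :=
    le_csSup hbdd ⟨{u0}, by simp [IsEquidistantSet], Finset.card_singleton u0⟩
  set P : ℝ := p.eval (lam ⟨0, hn1⟩) with hP
  set s : ℝ := (S.card : ℝ) with hsdef
  have hs1 : (1:ℝ) ≤ s := by
    have : 1 ≤ S.card := by rw [hScard]; exact hs1n
    rw [hsdef]; exact_mod_cast this
  set A := G.adjMatrix ℝ with hAdef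
  set B := Polynomial.aeval A p with hBdef
  set x : V → ℝ := fun u => if u ∈ S then 1 else 0 with hxdef
  have hAT : Aᵀ = A := G.isSymm_adjMatrix
  have hBT : Bᵀ = B := by
    rw [hBdef, Polynomial.aeval_eq_sum_range]
    simp only [Matrix.transpose_sum, Matrix.transpose_smul, Matrix.transpose_pow, hAT]
  have symmDot : ∀ (M : Matrix V V ℝ), Mᵀ = M → ∀ y z : V → ℝ,
      (M *ᵥ y) ⬝ᵥ z = y ⬝ᵥ (M *ᵥ z) := by
    intro M hM y z
    rw [Matrix.dotProduct_mulVec, ← Matrix.mulVec_transpose, hM, dotProduct_comm]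
  -- eigendata
  set bv : V → V → ℝ := fun i => (WithLp.equiv 2 (V → ℝ)) (hA.eigenvectorBasis i) with hbv
  set μ : V → ℝ := hA.eigenvalues with hμdef
  have hEig : ∀ i, A *ᵥ bv i = μ i • bv i := hA.mulVec_eigenvectorBasis
  have hBeig : ∀ i, B *ᵥ bv i = p.eval (μ i) • bv i := fun i =>
    aux_aeval_mulVec A p (bv i) (μ i) (hEig i)
  have hinner : ∀ a c : EuclideanSpace ℝ V,
      (inner ℝ a c : ℝ) = (WithLp.equiv 2 (V → ℝ)) a ⬝ᵥ (WithLp.equiv 2 (V → ℝ)) c := by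
    intro a c
    simp [PiLp.inner_apply, RCLike.inner_apply, conj_trivial, dotProduct, mul_comm]
  have parseval : ∀ y z : V → ℝ, ∑ i, (bv i ⬝ᵥ y) * (bv i ⬝ᵥ z) = y ⬝ᵥ z := by
    intro y z
    have h := hA.eigenvectorBasis.sum_inner_mul_inner
      ((WithLp.equiv 2 (V → ℝ)).symm y) ((WithLp.equiv 2 (V → ℝ)).symm z)
    simp only [hinner, Equiv.apply_symm_apply] at h
    rw [← h]
    refine Finset.sum_congr rfl fun i _ => ?_
    rw [dotProduct_comm ((WithLp.equiv 2 (V → ℝ)) (hA.eigenvectorBasis i)) y]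
  set c : V → ℝ := fun i => bv i ⬝ᵥ x with hcdef
  set d : V → ℝ := fun i => bv i ⬝ᵥ (fun _ => 1) with hddef
  have hxx : x ⬝ᵥ x = s := by
    simp only [hxdef, dotProduct, ite_mul, one_mul, zero_mul]
    rw [Finset.sum_congr rfl (g := fun u => if u ∈ S then (1:ℝ) else 0)
      (fun u _ => by by_cases h : u ∈ S <;> simp [h]), Finset.sum_ite_mem, Finset.univ_inter,
      Finset.sum_const, nsmul_eq_mul, mul_one]
  have hsum1 : ∑ i, c i * c i = s := by rw [← hxx]; exact parseval x x
  -- the quadratic form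
  have hrow : ∀ u, (B *ᵥ x) u = ∑ w ∈ S, B u w := by
    intro u
    simp only [Matrix.mulVec, dotProduct, hxdef, mul_ite, mul_one, mul_zero]
    rw [Finset.sum_ite_mem, Finset.univ_inter]
  have hQdiag : x ⬝ᵥ (B *ᵥ x) = ∑ u ∈ S, B u u := by
    have h1 : x ⬝ᵥ (B *ᵥ x) = ∑ u ∈ S, ∑ w ∈ S, B u w := by
      simp only [dotProduct, hxdef, ite_mul, one_mul, zero_mul]
      rw [Finset.sum_ite_mem, Finset.univ_inter]
      exact Finset.sum_congr rfl fun u _ => hrow u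
    rw [h1]
    refine Finset.sum_congr rfl fun u hu => ?_
    refine Finset.sum_eq_single u (fun w hw hne => ?_) (fun h => absurd hu h)
    refine aux_aeval_entry_zero G p t hp ?_
    rw [hS (Finset.mem_coe.mpr hu) (Finset.mem_coe.mpr hw) (fun hh => hne hh.symm)]
    omega
  have hdiagW : ∑ u ∈ S, B u u ≤ s * W := by
    calc ∑ u ∈ S, B u u ≤ ∑ _u ∈ S, W := Finset.sum_le_sum fun u _ => hW.2 ⟨u, rfl⟩
      _ = s * W := by rw [Finset.sum_const, nsmul_eq_mul]
  have hQeq : x ⬝ᵥ (B *ᵥ x) = ∑ i, p.eval (μ i) * (c i * c i) := by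
    rw [← parseval x (B *ᵥ x)]
    refine Finset.sum_congr rfl fun i _ => ?_
    have hzz : bv i ⬝ᵥ (B *ᵥ x) = p.eval (μ i) * (bv i ⬝ᵥ x) := by
      rw [← symmDot B hBT (bv i) x, hBeig i, smul_dotProduct, smul_eq_mul]
    rw [hzz, hcdef]
    ring
  -- the all-ones vector
  have hone : A *ᵥ (fun _ => 1) = ((k:ℝ) • (fun _ => (1:ℝ)) : V → ℝ) := by
    funext u
    rw [hAdef, adjMatrix_mulVec_apply, Finset.sum_const, nsmul_eq_mul,
      card_neighborFinset_eq_degree, hreg u]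
    simp
  have hμd : ∀ i, μ i * d i = (k:ℝ) * d i := by
    intro i
    have h1 : (A *ᵥ bv i) ⬝ᵥ (fun _ => 1) = μ i * d i := by
      rw [hEig i, smul_dotProduct, smul_eq_mul, hddef]
    have h2 : bv i ⬝ᵥ (A *ᵥ (fun _ => 1)) = (k:ℝ) * d i := by
      rw [hone, dotProduct_smul, smul_eq_mul, hddef]
    rw [← h1, symmDot A hAT, h2]
  have hex : ∃ i, μ i = (k:ℝ) := by
    by_contra hcon
    push_neg at hcon
    have hd0 : ∀ i, d i = 0 := by
      intro i
      have h3 : (μ i - (k:ℝ)) * d i = 0 := by linear_combination hμd i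
      exact (mul_eq_zero.mp h3).resolve_left (sub_ne_zero.mpr (hcon i))
    have h5 : (dotProduct (fun _ : V => (1:ℝ)) (fun _ => 1)) = (Fintype.card V : ℝ) := by
      simp [dotProduct]
    have h4 : (Fintype.card V : ℝ) = 0 := by
      rw [← h5, ← parseval (fun _ => 1) (fun _ => 1)]
      exact Finset.sum_eq_zero fun i _ => mul_eq_zero_of_left (hd0 i) _
    rw [hn] at h4
    have hpos : (0:ℝ) < (n:ℝ) := by exact_mod_cast hn1
    linarith
  -- bv i ≠ 0
  have hbvne : ∀ i, bv i ≠ 0 := by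
    intro i hbz
    refine hA.eigenvectorBasis.orthonormal.ne_zero i ?_
    have : (WithLp.equiv 2 (V → ℝ)).symm (bv i) = hA.eigenvectorBasis i := by
      rw [hbv]; exact Equiv.symm_apply_apply _ _
    rw [← this, hbz]
    simp
  have habs : ∀ j : Fin n, lam j ≤ (k:ℝ) := fun j => by
    rw [he j]
    exact (le_abs_self _).trans (aux_abs_eigen_le G hreg (hbvne (e j)) (hEig (e j)))
  obtain ⟨istar, histar⟩ := hex
  have hk_le : (k:ℝ) ≤ lam ⟨0, hn1⟩ := by
    rw [← histar]
    have h6 : μ istar = lam (e.symm istar) := by rw [he, Equiv.apply_symm_apply]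
    rw [h6]
    exact hanti (by simp [Fin.le_def])
  have hlam0 : lam ⟨0, hn1⟩ = (k:ℝ) := le_antisymm (habs _) hk_le
  set i0 : V := e ⟨0, hn1⟩ with hi0
  have hμi0 : μ i0 = (k:ℝ) := by rw [← he, hlam0]
  have hconst : ∀ i : V, μ i = (k:ℝ) → ∀ u w, bv i u = bv i w := by
    intro i hik u w
    refine aux_eigen_const G hG hreg ?_ u w
    rw [← hik]
    exact hEig i
  have horth : ∀ i j : V, ∑ u, bv i u * bv j u = if i = j then 1 else 0 := by
    intro i j
    have h7 := (orthonormal_iff_ite.mp hA.eigenvectorBasis.orthonormal) i j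
    rw [hinner] at h7
    exact h7
  -- uniqueness of the top eigenvector
  have huniq : ∀ i : V, i ≠ i0 → μ i ≠ (k:ℝ) := by
    intro i hi hik
    have hci := hconst i hik
    have hc0 := hconst i0 hμi0
    have h8 : ∑ u, bv i u * bv i u = (Fintype.card V : ℝ) * (bv i u0 * bv i u0) := by
      have hcg : ∀ u ∈ Finset.univ, bv i u * bv i u = bv i u0 * bv i u0 :=
        fun u _ => by rw [hci u u0]
      rw [Finset.sum_congr rfl hcg, Finset.sum_const, nsmul_eq_mul, Finset.card_univ]
    have h9 : ∑ u, bv i0 u * bv i0 u = (Fintype.card V : ℝ) * (bv i0 u0 * bv i0 u0) := by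
      have hcg : ∀ u ∈ Finset.univ, bv i0 u * bv i0 u = bv i0 u0 * bv i0 u0 :=
        fun u _ => by rw [hc0 u u0]
      rw [Finset.sum_congr rfl hcg, Finset.sum_const, nsmul_eq_mul, Finset.card_univ]
    have h10 : ∑ u, bv i u * bv i0 u = (Fintype.card V : ℝ) * (bv i u0 * bv i0 u0) := by
      have hcg : ∀ u ∈ Finset.univ, bv i u * bv i0 u = bv i u0 * bv i0 u0 :=
        fun u _ => by rw [hci u u0, hc0 u u0]
      rw [Finset.sum_congr rfl hcg, Finset.sum_const, nsmul_eq_mul, Finset.card_univ]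
    have hii := horth i i
    have h00 := horth i0 i0
    have hio := horth i i0
    rw [if_pos rfl, h8] at hii
    rw [if_pos rfl, h9] at h00
    rw [if_neg hi, h10] at hio
    have hcard : (0:ℝ) < (Fintype.card V : ℝ) := by rw [hn]; exact_mod_cast hn1
    have hbi : bv i u0 * bv i0 u0 = 0 :=
      (mul_eq_zero.mp hio).resolve_left (ne_of_gt hcard)
    nlinarith [hii, h00, hbi]
  have hlpμ : ∀ i : V, i ≠ i0 → lp ≤ p.eval (μ i) := by
    intro i hi
    have hji : μ i = lam (e.symm i) := by rw [he, Equiv.apply_symm_apply]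
    refine hlp.2 ⟨e.symm i, ?_, by rw [hji]⟩
    intro hj
    exact hi (by rw [hi0, ← hj, Equiv.apply_symm_apply])
  -- value of c i0
  have hc0bv := hconst i0 hμi0
  have h00 := horth i0 i0
  rw [if_pos rfl] at h00
  have ha0sq : (Fintype.card V : ℝ) * (bv i0 u0 * bv i0 u0) = 1 := by
    have hcg : ∀ u ∈ Finset.univ, bv i0 u * bv i0 u = bv i0 u0 * bv i0 u0 :=
      fun u _ => by rw [hc0bv u u0]
    rw [← h00, Finset.sum_congr rfl hcg, Finset.sum_const, nsmul_eq_mul, Finset.card_univ]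
  have hci0 : c i0 = bv i0 u0 * s := by
    have hh : c i0 = ∑ u ∈ S, bv i0 u := by
      rw [hcdef]
      simp only [dotProduct, hxdef, mul_ite, mul_one, mul_zero]
      rw [Finset.sum_ite_mem, Finset.univ_inter]
    rw [hh, Finset.sum_congr rfl (fun u _ => hc0bv u u0), Finset.sum_const, nsmul_eq_mul,
      hsdef, mul_comm]
  have hci0sq : (n:ℝ) * (c i0 * c i0) = s * s := by
    rw [hci0, ← hn]
    linear_combination (s * s) * ha0sq
  -- assembling the inequality
  have hμP : p.eval (μ i0) = P := by rw [← he ⟨0, hn1⟩, hP]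
  have key : P * (c i0 * c i0) + lp * (s - c i0 * c i0) ≤ s * W := by
    have hsplit : ∑ i, p.eval (μ i) * (c i * c i)
        = p.eval (μ i0) * (c i0 * c i0)
          + ∑ i ∈ Finset.univ.erase i0, p.eval (μ i) * (c i * c i) :=
      (Finset.add_sum_erase Finset.univ _ (Finset.mem_univ i0)).symm
    have hs2 : s - c i0 * c i0 = ∑ i ∈ Finset.univ.erase i0, c i * c i := by
      rw [← hsum1, ← Finset.add_sum_erase Finset.univ (fun i => c i * c i) (Finset.mem_univ i0)]
      ring
    have hlow : lp * (s - c i0 * c i0)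
        ≤ ∑ i ∈ Finset.univ.erase i0, p.eval (μ i) * (c i * c i) := by
      rw [hs2, Finset.mul_sum]
      refine Finset.sum_le_sum fun i hi => ?_
      exact mul_le_mul_of_nonneg_right (hlpμ i (Finset.ne_of_mem_erase hi)) (mul_self_nonneg _)
    calc P * (c i0 * c i0) + lp * (s - c i0 * c i0)
        ≤ p.eval (μ i0) * (c i0 * c i0)
            + ∑ i ∈ Finset.univ.erase i0, p.eval (μ i) * (c i * c i) := by
          rw [hμP]; linarith [hlow]
      _ = ∑ i, p.eval (μ i) * (c i * c i) := hsplit.symm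
      _ = x ⬝ᵥ (B *ᵥ x) := hQeq.symm
      _ = ∑ u ∈ S, B u u := hQdiag
      _ ≤ s * W := hdiagW
  have hn0 : (0:ℝ) < (n:ℝ) := by exact_mod_cast hn1
  have h3 : (n:ℝ) * (P * (c i0 * c i0) + lp * (s - c i0 * c i0)) ≤ (n:ℝ) * (s * W) :=
    mul_le_mul_of_nonneg_left key hn0.le
  have h4 : s * s * (P - lp) + (n:ℝ) * lp * s ≤ (n:ℝ) * s * W := by nlinarith [h3, hci0sq]
  have hs0 : (0:ℝ) < s := by linarith
  have h7 : s * (s * (P - lp)) ≤ s * ((n:ℝ) * (W - lp)) := by nlinarith [h4]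
  have h8 : s * (P - lp) ≤ (n:ℝ) * (W - lp) := le_of_mul_le_mul_left h7 hs0
  rw [le_div_iff₀ (by linarith : (0:ℝ) < P - lp), ← hScard]
  exact h8
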